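/- If U = U_s ⊗ U_e and V = V_s ⊗ V_e with U_s, V_s unitary on H_s and U_e, V_e unitary on H_e, then Δ̃_HS([U],[V]) = √(1 − (1/n_s)|Tr(U_s V_s†)|). In particular this distance is zero if and only if U_s = e^{iφ} V_s for some real φ. -/

import Mathlib

open Matrix Kronecker
open scoped ComplexOrder

/-- Hilbert–Schmidt (Frobenius) norm of a complex square matrix. -/
noncomputable def hsNorm {k : Type*} [Fintype k] (M : Matrix k k ℂ) : ℝ :=
  Real.sqrt (Matrix.trace (Mᴴ * M)).re

/-- Square root of a positive-semidefinite matrix, as `Matrix.PosSemidef.sqrt` was defined in older Mathlib. -/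
noncomputable def posSemidefSqrt {k : Type*} [Fintype k] [DecidableEq k] {A : Matrix k k ℂ}
    (hA : A.PosSemidef) : Matrix k k ℂ :=
  (hA.1.eigenvectorUnitary : Matrix k k ℂ) * diagonal ((↑) ∘ (√·) ∘ hA.1.eigenvalues) *
    (star hA.1.eigenvectorUnitary : Matrix k k ℂ)

/-- Trace norm: trace of the positive-semidefinite square root of `Mᴴ * M`. -/
noncomputable def traceNorm {k : Type*} [Fintype k] [DecidableEq k] (M : Matrix k k ℂ) : ℝ :=
  (Matrix.trace (posSemidefSqrt (Matrix.posSemidef_conjTranspose_mul_self M))).re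

/-- Induced two-norm: the largest singular value of `M`. -/
noncomputable def twoNorm {k : Type*} [Fintype k] [DecidableEq k] (M : Matrix k k ℂ) : ℝ :=
  ⨆ i, Real.sqrt
    ((Matrix.PosSemidef.isHermitian
      (Matrix.posSemidef_conjTranspose_mul_self M)).eigenvalues i)

/-- Partial trace over the environment factor `e`. -/
noncomputable def ptraceE {s e : Type*} [Fintype s] [Fintype e]
    (M : Matrix (s × e) (s × e) ℂ) : Matrix s s ℂ :=
  Matrix.of fun i j => ∑ ν : e, M (i, ν) (j, ν)

/-- Partial trace over the system factor `s`. -/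
noncomputable def ptraceS {s e : Type*} [Fintype s] [Fintype e]
    (M : Matrix (s × e) (s × e) ℂ) : Matrix e e ℂ :=
  Matrix.of fun μ ν => ∑ i : s, M (i, μ) (i, ν)

/-- A density matrix: positive semidefinite with unit trace. -/
def IsDensity {k : Type*} [Fintype k] (ρ : Matrix k k ℂ) : Prop :=
  ρ.PosSemidef ∧ Matrix.trace ρ = 1

lemma conjT_kron {s e : Type*} [Fintype s] [Fintype e] (A : Matrix s s ℂ) (B : Matrix e e ℂ) :
    (A ⊗ₖ B)ᴴ = Aᴴ ⊗ₖ Bᴴ := by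
  ext ⟨i, μ⟩ ⟨j, ν⟩
  simp [Matrix.conjTranspose_apply, Matrix.kroneckerMap_apply]

lemma trace_hs {k : Type*} [Fintype k] (M : Matrix k k ℂ) :
    (Matrix.trace (Mᴴ * M)).re = ∑ i, ∑ j, ‖M j i‖ ^ 2 := by
  simp only [Matrix.trace, Matrix.diag, Matrix.mul_apply, Matrix.conjTranspose_apply,
    Complex.re_sum]
  congr 1; ext i; congr 1; ext j
  rw [Complex.star_def, ← Complex.normSq_eq_conj_mul_self, Complex.ofReal_re,
    Complex.normSq_eq_norm_sq]

lemma trace_hs_nonneg {k : Type*} [Fintype k] (M : Matrix k k ℂ) :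
    0 ≤ (Matrix.trace (Mᴴ * M)).re := by
  rw [trace_hs]; positivity

lemma unitary_diag_le {k : Type*} [Fintype k] [DecidableEq k] (W : Matrix k k ℂ)
    (hW : W ∈ Matrix.unitaryGroup k ℂ) (i : k) : ‖W i i‖ ≤ 1 := by
  have h1 : (W * Wᴴ) i i = 1 := by
    rw [← Matrix.star_eq_conjTranspose, (Matrix.mem_unitaryGroup_iff.mp hW : W * star W = 1)]
    simp
  have h2 : (∑ j, Complex.normSq (W i j) : ℝ) = 1 := by
    have := congrArg Complex.re h1
    simpa [Matrix.mul_apply, Matrix.conjTranspose_apply, Complex.re_sum, Complex.mul_conj,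
      Complex.star_def] using this
  have h3 : Complex.normSq (W i i) ≤ 1 := by
    rw [← h2]
    exact Finset.single_le_sum (fun j _ => Complex.normSq_nonneg _) (Finset.mem_univ i)
  nlinarith [Complex.sq_norm (W i i), norm_nonneg (W i i)]

lemma unitary_trace_abs_le {k : Type*} [Fintype k] [DecidableEq k] (W : Matrix k k ℂ)
    (hW : W ∈ Matrix.unitaryGroup k ℂ) :
    ‖Matrix.trace W‖ ≤ Fintype.card k := by
  calc ‖Matrix.trace W‖ ≤ ∑ i, ‖W i i‖ := by
        simpa [Matrix.trace, Matrix.diag] using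
          norm_sum_le Finset.univ (fun i => W i i)
    _ ≤ ∑ _i : k, (1 : ℝ) := Finset.sum_le_sum fun i _ => unitary_diag_le W hW i
    _ = Fintype.card k := by simp

lemma trace_expand {s e : Type*} [Fintype s] [Fintype e] [DecidableEq s] [DecidableEq e]
    (Us Vs : Matrix s s ℂ) (Ue We : Matrix e e ℂ)
    (hUs : Us ∈ Matrix.unitaryGroup s ℂ) (hVs : Vs ∈ Matrix.unitaryGroup s ℂ)
    (hUe : Ue ∈ Matrix.unitaryGroup e ℂ) (hWe : We ∈ Matrix.unitaryGroup e ℂ) :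
    (Matrix.trace (((Us ⊗ₖ Ue) - (Vs ⊗ₖ We))ᴴ * ((Us ⊗ₖ Ue) - (Vs ⊗ₖ We)))).re
    = 2 * (Fintype.card s * Fintype.card e) -
      2 * (Matrix.trace (Usᴴ * Vs) * Matrix.trace (Ueᴴ * We)).re := by
  have hu1 : Usᴴ * Us = 1 := by
    rw [← Matrix.star_eq_conjTranspose]; exact Matrix.mem_unitaryGroup_iff'.mp hUs
  have hu2 : Vsᴴ * Vs = 1 := by
    rw [← Matrix.star_eq_conjTranspose]; exact Matrix.mem_unitaryGroup_iff'.mp hVs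
  have hu3 : Ueᴴ * Ue = 1 := by
    rw [← Matrix.star_eq_conjTranspose]; exact Matrix.mem_unitaryGroup_iff'.mp hUe
  have hu4 : Weᴴ * We = 1 := by
    rw [← Matrix.star_eq_conjTranspose]; exact Matrix.mem_unitaryGroup_iff'.mp hWe
  have hA : (Us ⊗ₖ Ue)ᴴ * (Us ⊗ₖ Ue) = 1 := by
    rw [conjT_kron, ← Matrix.mul_kronecker_mul, hu1, hu3, Matrix.one_kronecker_one]
  have hB : (Vs ⊗ₖ We)ᴴ * (Vs ⊗ₖ We) = 1 := by
    rw [conjT_kron, ← Matrix.mul_kronecker_mul, hu2, hu4, Matrix.one_kronecker_one]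
  have hAB : Matrix.trace ((Us ⊗ₖ Ue)ᴴ * (Vs ⊗ₖ We)) =
      Matrix.trace (Usᴴ * Vs) * Matrix.trace (Ueᴴ * We) := by
    rw [conjT_kron, ← Matrix.mul_kronecker_mul, Matrix.trace_kronecker]
  have hBA : Matrix.trace ((Vs ⊗ₖ We)ᴴ * (Us ⊗ₖ Ue)) =
      star (Matrix.trace (Usᴴ * Vs) * Matrix.trace (Ueᴴ * We)) := by
    rw [conjT_kron, ← Matrix.mul_kronecker_mul, Matrix.trace_kronecker]
    have h1 : Vsᴴ * Us = (Usᴴ * Vs)ᴴ := by simp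
    have h2 : Weᴴ * Ue = (Ueᴴ * We)ᴴ := by simp
    rw [h1, h2, Matrix.trace_conjTranspose, Matrix.trace_conjTranspose]
    exact (star_mul' _ _).symm
  rw [Matrix.conjTranspose_sub, Matrix.sub_mul, Matrix.mul_sub, Matrix.mul_sub,
    Matrix.trace_sub, Matrix.trace_sub, Matrix.trace_sub, hA, hB, hAB, hBA,
    Matrix.trace_one]
  simp only [Complex.sub_re, Complex.add_re, Complex.conj_re, Complex.natCast_re,
    RCLike.star_def, Fintype.card_prod, Nat.cast_mul, Complex.mul_re, Complex.natCast_im,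
    mul_zero, zero_mul, sub_zero]
  ring

/-- The value of the objective for a given unitary `We` in place of `Φ * Ve`. -/
lemma value_eq {s e : Type*} [Fintype s] [Fintype e] [DecidableEq s] [DecidableEq e]
    [Nonempty s] [Nonempty e]
    (Us Vs : Matrix s s ℂ) (Ue We : Matrix e e ℂ)
    (hUs : Us ∈ Matrix.unitaryGroup s ℂ) (hVs : Vs ∈ Matrix.unitaryGroup s ℂ)
    (hUe : Ue ∈ Matrix.unitaryGroup e ℂ) (hWe : We ∈ Matrix.unitaryGroup e ℂ) :
    hsNorm ((Us ⊗ₖ Ue) - (Vs ⊗ₖ We)) / Real.sqrt (2 * (Fintype.card (s × e))) =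
    Real.sqrt (1 - (Matrix.trace (Usᴴ * Vs) * Matrix.trace (Ueᴴ * We)).re /
      (Fintype.card s * Fintype.card e)) := by
  have hN : (0 : ℝ) < (Fintype.card s : ℝ) * Fintype.card e := by
    have := Fintype.card_pos (α := s); have := Fintype.card_pos (α := e); positivity
  rw [hsNorm, ← Real.sqrt_div (trace_hs_nonneg _)]
  congr 1
  rw [trace_expand Us Vs Ue We hUs hVs hUe hWe]
  rw [Fintype.card_prod]
  push_cast
  field_simp

lemma cs_eq {s : Type*} [Fintype s] [DecidableEq s] [Nonempty s]
    (Us Vs : Matrix s s ℂ)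
    (hUs : Us ∈ Matrix.unitaryGroup s ℂ) (hVs : Vs ∈ Matrix.unitaryGroup s ℂ)
    (h : ‖Matrix.trace (Us * Vsᴴ)‖ = Fintype.card s) :
    ∃ φ : ℝ, Us = Complex.exp (φ * Complex.I) • Vs := by
  set ns : ℝ := (Fintype.card s : ℝ) with hns
  have hns0 : (0 : ℝ) < ns := by rw [hns]; exact_mod_cast Fintype.card_pos (α := s)
  -- vectors in Euclidean space
  set x : EuclideanSpace ℂ (s × s) := WithLp.toLp 2 (fun p : s × s => Vs p.1 p.2) with hx
  set y : EuclideanSpace ℂ (s × s) := WithLp.toLp 2 (fun p : s × s => Us p.1 p.2) with hy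
  have hnormsq : ∀ (M : Matrix s s ℂ), M ∈ Matrix.unitaryGroup s ℂ →
      (∑ p : s × s, ‖M p.1 p.2‖ ^ 2) = ns := by
    intro M hM
    have h1 : Mᴴ * M = 1 := by
      rw [← Matrix.star_eq_conjTranspose]; exact Matrix.mem_unitaryGroup_iff'.mp hM
    have := trace_hs M
    rw [h1, Matrix.trace_one] at this
    rw [Fintype.sum_prod_type]
    rw [Finset.sum_comm]
    exact_mod_cast this.symm
  have hxnorm : ‖x‖ = Real.sqrt ns := by
    rw [EuclideanSpace.norm_eq]
    congr 1
    exact hnormsq Vs hVs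
  have hynorm : ‖y‖ = Real.sqrt ns := by
    rw [EuclideanSpace.norm_eq]
    congr 1
    exact hnormsq Us hUs
  have hinner : (inner ℂ x y : ℂ) = Matrix.trace (Us * Vsᴴ) := by
    rw [PiLp.inner_apply]
    rw [Matrix.trace, Fintype.sum_prod_type]
    simp only [Matrix.diag, Matrix.mul_apply, Matrix.conjTranspose_apply, RCLike.inner_apply]
    congr 1
  have hx0 : x ≠ 0 := by
    intro h0
    rw [h0, norm_zero] at hxnorm
    exact absurd hxnorm.symm (by positivity)
  have hy0 : y ≠ 0 := by
    intro h0
    rw [h0, norm_zero] at hynorm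
    exact absurd hynorm.symm (by positivity)
  have heq : ‖(inner ℂ x y : ℂ)‖ = ‖x‖ * ‖y‖ := by
    rw [hinner, hxnorm, hynorm, h, Real.mul_self_sqrt hns0.le]
  obtain ⟨r, hr0, hxy⟩ := (norm_inner_eq_norm_iff hx0 hy0).mp heq
  have hUsVs : Us = r • Vs := by
    ext i j
    have := congrArg (· (i, j)) hxy
    simpa [hx, hy, Matrix.smul_apply, smul_eq_mul] using this
  have hrabs : ‖r‖ = 1 := by
    have := hynorm
    rw [hxy, norm_smul, hxnorm] at this
    have hs : Real.sqrt ns ≠ 0 := by positivity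
    field_simp at this
    exact this
  refine ⟨r.arg, ?_⟩
  have : Complex.exp (↑r.arg * Complex.I) = r := by
    have := Complex.norm_mul_exp_arg_mul_I r
    rwa [hrabs,
      Complex.ofReal_one, one_mul] at this
  rw [this]; exact hUsVs


/-- for tensor-product unitaries `U = U_s ⊗ U_e`, `V = V_s ⊗ V_e`,
`Δ̃_HS([U],[V]) = √(1 − |Tr(U_s V_s†)|/n_s)`, which vanishes iff `U_s = e^{iφ} V_s`. -/
theorem stmt9 {s e : Type*} [Fintype s] [Fintype e] [DecidableEq s] [DecidableEq e]
    [Nonempty s] [Nonempty e]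
    (Us Vs : Matrix s s ℂ) (Ue Ve : Matrix e e ℂ)
    (hUs : Us ∈ Matrix.unitaryGroup s ℂ) (hVs : Vs ∈ Matrix.unitaryGroup s ℂ)
    (hUe : Ue ∈ Matrix.unitaryGroup e ℂ) (hVe : Ve ∈ Matrix.unitaryGroup e ℂ) :
    IsLeast {x : ℝ | ∃ Φ ∈ Matrix.unitaryGroup e ℂ,
        x = hsNorm ((Us ⊗ₖ Ue) - ((1 : Matrix s s ℂ) ⊗ₖ Φ) * (Vs ⊗ₖ Ve)) /
          Real.sqrt (2 * (Fintype.card (s × e)))}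
      (Real.sqrt (1 - ‖Matrix.trace (Us * Vsᴴ)‖ / (Fintype.card s))) ∧
    (Real.sqrt (1 - ‖Matrix.trace (Us * Vsᴴ)‖ / (Fintype.card s)) = 0 ↔
      ∃ φ : ℝ, Us = Complex.exp (φ * Complex.I) • Vs) := by
  classical
  have hns0 : (0 : ℝ) < (Fintype.card s : ℝ) := by exact_mod_cast Fintype.card_pos (α := s)
  have hne0 : (0 : ℝ) < (Fintype.card e : ℝ) := by exact_mod_cast Fintype.card_pos (α := e)
  set c : ℂ := Matrix.trace (Usᴴ * Vs) with hc
  have habs : ‖Matrix.trace (Us * Vsᴴ)‖ = ‖c‖ := by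
    have h1 : Matrix.trace (Us * Vsᴴ) = star c := by
      rw [Matrix.trace_mul_comm, hc, show Vsᴴ * Us = (Usᴴ * Vs)ᴴ by simp,
        Matrix.trace_conjTranspose]
    rw [h1]
    exact Complex.norm_conj c
  have hWmem : Usᴴ * Vs ∈ Matrix.unitaryGroup s ℂ := by
    rw [← Matrix.star_eq_conjTranspose]; exact mul_mem (Unitary.star_mem hUs) hVs
  have hcle : ‖c‖ ≤ (Fintype.card s : ℝ) := unitary_trace_abs_le _ hWmem
  refine ⟨⟨?_, ?_⟩, ?_, ?_⟩
  · -- membership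
    set ε : ℂ := if c = 0 then 1 else (starRingEnd ℂ) c / (‖c‖ : ℂ) with hε
    have hεabs : ‖ε‖ = 1 := by
      by_cases h : c = 0
      · simp [hε, h]
      · rw [hε, if_neg h, norm_div, Complex.norm_conj, Complex.norm_real, Real.norm_eq_abs,
          abs_of_nonneg (norm_nonneg c), div_self (norm_ne_zero_iff.mpr h)]
    have hcε : c * ε = (‖c‖ : ℂ) := by
      by_cases h : c = 0
      · simp [hε, h]
      · rw [hε, if_neg h, mul_div_assoc']
        rw [Complex.mul_conj]
        rw [div_eq_iff (show ((‖c‖ : ℂ)) ≠ 0 by exact_mod_cast norm_ne_zero_iff.mpr h)]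
        norm_cast
        rw [Complex.normSq_eq_norm_sq]; ring
    have hΦmem : ε • (Ue * Veᴴ) ∈ Matrix.unitaryGroup e ℂ := by
      rw [Matrix.mem_unitaryGroup_iff]
      have hM : (Ue * Veᴴ) * star (Ue * Veᴴ) = 1 := by
        rw [← Matrix.star_eq_conjTranspose]
        exact Matrix.mem_unitaryGroup_iff.mp (mul_mem hUe (Unitary.star_mem hVe))
      rw [star_smul, smul_mul_assoc, mul_smul_comm, smul_smul, hM]
      have : ε * star ε = 1 := by
        rw [Complex.star_def, Complex.mul_conj]
        norm_cast
        rw [Complex.normSq_eq_norm_sq, hεabs]; norm_num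
      rw [this, one_smul]
    refine ⟨ε • (Ue * Veᴴ), hΦmem, ?_⟩
    rw [← Matrix.mul_kronecker_mul, Matrix.one_mul,
        value_eq Us Vs Ue _ hUs hVs hUe (mul_mem hΦmem hVe)]
    congr 1
    have htr : Matrix.trace (Ueᴴ * ((ε • (Ue * Veᴴ)) * Ve)) = ε * Fintype.card e := by
      have h1 : Ueᴴ * Ue = 1 := by
        rw [← Matrix.star_eq_conjTranspose]; exact Matrix.mem_unitaryGroup_iff'.mp hUe
      have h2 : Veᴴ * Ve = 1 := by
        rw [← Matrix.star_eq_conjTranspose]; exact Matrix.mem_unitaryGroup_iff'.mp hVe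
      rw [smul_mul_assoc, mul_smul_comm, Matrix.trace_smul]
      rw [show Ueᴴ * (Ue * Veᴴ * Ve) = (Ueᴴ * Ue) * (Veᴴ * Ve) by
        simp only [Matrix.mul_assoc], h1, h2, one_mul, Matrix.trace_one]
      simp [smul_eq_mul]
    rw [htr, show c * (ε * (Fintype.card e : ℂ)) = (c * ε) * (Fintype.card e : ℂ) by ring,
      hcε, habs]
    norm_cast
    push_cast
    have h1 : (Fintype.card s : ℝ) ≠ 0 := hns0.ne'
    have h2 : (Fintype.card e : ℝ) ≠ 0 := hne0.ne'
    field_simp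
  · -- lower bound
    rintro x ⟨Φ, hΦ, rfl⟩
    rw [← Matrix.mul_kronecker_mul, Matrix.one_mul,
      value_eq Us Vs Ue _ hUs hVs hUe (mul_mem hΦ hVe)]
    apply Real.sqrt_le_sqrt
    set t : ℂ := Matrix.trace (Ueᴴ * (Φ * Ve)) with ht
    have htle : ‖t‖ ≤ (Fintype.card e : ℝ) := by
      apply unitary_trace_abs_le
      rw [← Matrix.star_eq_conjTranspose]
      exact mul_mem (Unitary.star_mem hUe) (mul_mem hΦ hVe)
    have hr : (c * t).re ≤ ‖c‖ * (Fintype.card e : ℝ) := by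
      calc (c * t).re ≤ ‖c * t‖ := Complex.re_le_norm _
        _ = ‖c‖ * ‖t‖ := norm_mul _ _
        _ ≤ ‖c‖ * (Fintype.card e : ℝ) :=
            mul_le_mul_of_nonneg_left htle (norm_nonneg c)
    rw [habs]
    apply sub_le_sub_left
    rw [div_le_div_iff₀ (by positivity) hns0]
    nlinarith [hns0, hne0]
  · -- sqrt = 0 → ∃ φ
    intro h
    have h1 : 1 - ‖Matrix.trace (Us * Vsᴴ)‖ / (Fintype.card s : ℝ) ≤ 0 :=
      Real.sqrt_eq_zero'.mp h
    have h2 : ‖Matrix.trace (Us * Vsᴴ)‖ = (Fintype.card s : ℝ) := by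
      rw [habs] at h1 ⊢
      have h3 : (Fintype.card s : ℝ) ≤ ‖c‖ := by
        rw [sub_nonpos, le_div_iff₀ hns0, one_mul] at h1
        linarith
      linarith
    exact cs_eq Us Vs hUs hVs h2
  · -- ∃ φ → sqrt = 0
    rintro ⟨φ, hφ⟩
    have hVV : Vs * Vsᴴ = 1 := by
      rw [← Matrix.star_eq_conjTranspose]; exact Matrix.mem_unitaryGroup_iff.mp hVs
    have htr : Matrix.trace (Us * Vsᴴ) = Complex.exp (φ * Complex.I) * (Fintype.card s : ℂ) := by
      rw [hφ, Matrix.smul_mul, Matrix.trace_smul, hVV, Matrix.trace_one, smul_eq_mul]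
    rw [htr, norm_mul, Complex.norm_exp_ofReal_mul_I, one_mul, Complex.norm_natCast,
      div_self hns0.ne']
    simp
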